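/- Let m ≥ 0, m' ≥ 0 and i ≥ 1 be integers, and let h, h' ∈ ℚ[t]. Suppose there exist nonnegative rational numbers g_0, …, g_{⌊(m+1)/2⌋} with h(t) = ∑_{j} g_j t^j P_{m−2j,i}(t) and nonnegative rational numbers g'_0, …, g'_{⌊(m'+1)/2⌋} with h'(t) = ∑_{j} g'_j t^j P_{m'−2j,i}(t). Then there exist nonnegative rational numbers g''_0, …, g''_{⌊(m+m'+2)/2⌋} with h(t)·h'(t) = ∑_{j} g''_j t^j P_{m+m'+1−2j,i}(t). -/

import Mathlib

open Polynomial Finset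

/-- The polynomial `P_{d,i}(t)`, here with rational coefficients: `P_{d,i} = 1` for `d < 0`
(in particular `P_{-1,i} = 1`), and for `d ≥ 0`,
`P_{d,i} = (1 + t + ⋯ + t^i)^q (1 + t + ⋯ + t^r)` where `q ≥ 0` and `1 ≤ r ≤ i` are the
unique integers with `d + 1 = q·i + r` (for `i ≥ 1`, `q = ⌊d/i⌋` and `r = (d mod i) + 1`). -/
noncomputable def Ppoly (d : ℤ) (i : ℕ) : ℚ[X] :=
  if d < 0 then 1
  else (∑ k ∈ range (i + 1), X ^ k) ^ (d.toNat / i) *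
    (∑ k ∈ range (d.toNat % i + 2), X ^ k)

noncomputable def Rpoly (n : ℕ) : ℚ[X] := ∑ k ∈ range (n + 1), X ^ k

lemma Rpoly_mul (n : ℕ) : Rpoly n * (X - 1) = X ^ (n + 1) - 1 := by
  simpa [Rpoly] using geom_sum_mul (X : ℚ[X]) (n + 1)

lemma Ppoly_neg {d : ℤ} (hd : d < 0) (i : ℕ) : Ppoly d i = 1 := if_pos hd

lemma Ppoly_nonneg_eq {d : ℤ} (hd : 0 ≤ d) (i : ℕ) :
    Ppoly d i = Rpoly i ^ (d.toNat / i) * Rpoly (d.toNat % i + 1) := by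
  rw [Ppoly, if_neg (not_lt.2 hd)]
  rfl

lemma X_sub_one_ne : ((X : ℚ[X]) - 1) ≠ 0 := by
  intro hcon
  have h2 : ((X : ℚ[X]) - 1).eval 2 = 1 := by norm_num
  rw [hcon] at h2
  norm_num at h2

lemma mul_Rpoly_aux {r r' : ℕ} (h : r' ≤ r) :
    Rpoly r * Rpoly r' = ∑ k ∈ range (r' + 1), X ^ k * Rpoly (r + r' - 2 * k) := by
  apply mul_right_cancel₀ (mul_ne_zero X_sub_one_ne X_sub_one_ne)
  have lhs : Rpoly r * Rpoly r' * ((X - 1) * (X - 1))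
      = (X ^ (r + 1) - 1) * (X ^ (r' + 1) - 1) := by
    rw [show Rpoly r * Rpoly r' * ((X - 1) * (X - 1))
        = (Rpoly r * (X - 1)) * (Rpoly r' * (X - 1)) by ring, Rpoly_mul, Rpoly_mul]
  rw [lhs, Finset.sum_mul]
  have step : ∀ k ∈ range (r' + 1),
      X ^ k * Rpoly (r + r' - 2 * k) * ((X - 1) * (X - 1))
      = (X ^ (r + 1 + (r' - k)) - X ^ k) * (X - 1) := by
    intro k hk
    have hk' : k ≤ r' := by simpa [Nat.lt_succ_iff] using hk
    have e1 : X ^ k * Rpoly (r + r' - 2 * k) * ((X - 1) * (X - 1))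
        = X ^ k * (Rpoly (r + r' - 2 * k) * (X - 1)) * (X - 1) := by ring
    rw [e1, Rpoly_mul,
      show r + 1 + (r' - k) = k + (r + r' - 2 * k + 1) from by omega, pow_add]
    ring
  rw [Finset.sum_congr rfl step, ← Finset.sum_mul]
  have reflect : ∑ k ∈ range (r' + 1), (X ^ (r + 1 + (r' - k)) - X ^ k : ℚ[X])
      = X ^ (r + 1) * Rpoly r' - Rpoly r' := by
    have e := Finset.sum_range_reflect (fun k => (X : ℚ[X]) ^ (r + 1 + k)) (r' + 1)
    simp only [Nat.add_sub_cancel] at e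
    rw [Finset.sum_sub_distrib, e, Rpoly, Finset.mul_sum]
    simp only [pow_add]
  rw [reflect]
  rw [show (X ^ (r + 1) * Rpoly r' - Rpoly r') * ((X:ℚ[X]) - 1)
      = (X ^ (r + 1) - 1) * (Rpoly r' * (X - 1)) by ring, Rpoly_mul]

lemma mul_Rpoly (r r' : ℕ) :
    Rpoly r * Rpoly r' = ∑ k ∈ range (min r r' + 1), X ^ k * Rpoly (r + r' - 2 * k) := by
  rcases le_total r' r with h | h
  · rw [min_eq_right h]; exact mul_Rpoly_aux h
  · rw [min_eq_left h, mul_comm, mul_Rpoly_aux h]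
    exact Finset.sum_congr rfl fun k _ => by rw [Nat.add_comm r' r]

-- S^Q
lemma pow_mul_Ppoly {i : ℕ} (hi : 1 ≤ i) (Q s : ℕ) :
    Rpoly i ^ Q * Ppoly ((s : ℤ) - 1) i = Ppoly (((Q * i + s : ℕ) : ℤ) - 1) i := by
  rcases Nat.eq_zero_or_pos s with hs | hs
  · subst hs
    rcases Nat.eq_zero_or_pos Q with hQ | hQ
    · subst hQ; simp [Ppoly_neg (by norm_num : (-1:ℤ) < 0)]
    · rw [Ppoly_neg (by norm_num : ((0:ℕ):ℤ) - 1 < 0), mul_one]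
      have h0 : (0 : ℤ) ≤ ((Q * i + 0 : ℕ) : ℤ) - 1 := by
        have : 1 ≤ Q * i := Nat.one_le_iff_ne_zero.2 (by positivity)
        omega
      rw [Ppoly_nonneg_eq h0]
      have ht : (((Q * i + 0 : ℕ) : ℤ) - 1).toNat = i - 1 + (Q - 1) * i := by
        have hQi : i ≤ Q * i := Nat.le_mul_of_pos_left i hQ
        have : Q * i = i + (Q - 1) * i := by rw [Nat.sub_mul, one_mul]; omega
        omega
      rw [ht, Nat.add_mul_div_right _ _ (by omega : 0 < i),
        Nat.add_mul_mod_self_right, Nat.div_eq_of_lt (by omega), Nat.mod_eq_of_lt (by omega)]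
      rw [show i - 1 + 1 = i from by omega]
      rw [zero_add, show Rpoly i ^ (Q - 1) * Rpoly i = Rpoly i ^ Q from by
        rw [← pow_succ]; congr 1; omega]
  · have h1 : (0:ℤ) ≤ (s:ℤ) - 1 := by omega
    have h2 : (0:ℤ) ≤ ((Q * i + s : ℕ) : ℤ) - 1 := by omega
    rw [Ppoly_nonneg_eq h1, Ppoly_nonneg_eq h2]
    have t1 : ((s:ℤ) - 1).toNat = s - 1 := by omega
    have t2 : (((Q * i + s : ℕ) : ℤ) - 1).toNat = s - 1 + Q * i := by omega
    rw [t1, t2, Nat.add_mul_div_right _ _ (by omega : 0 < i), Nat.add_mul_mod_self_right]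
    rw [← mul_assoc, ← pow_add]
    congr 2
    omega

lemma Rpoly_eq_Ppoly {i s : ℕ} (hi : 1 ≤ i) (hs : s ≤ i) :
    Rpoly s = Ppoly ((s : ℤ) - 1) i := by
  rcases Nat.eq_zero_or_pos s with h0 | h0
  · subst h0
    rw [Ppoly_neg (by norm_num : ((0:ℕ):ℤ) - 1 < 0)]
    simp [Rpoly]
  · rw [Ppoly_nonneg_eq (by omega : (0:ℤ) ≤ (s:ℤ) - 1)]
    have t1 : ((s:ℤ) - 1).toNat = s - 1 := by omega
    rw [t1, Nat.div_eq_of_lt (by omega), Nat.mod_eq_of_lt (by omega), pow_zero, one_mul,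
      show s - 1 + 1 = s from by omega]

-- the "head chunk": ∑_{k ≤ L-i} X^k R_{L-2k} = Ppoly (L-1)
lemma chunk {i L : ℕ} (hi : 1 ≤ i) (h2 : 2 ≤ L) (h2i : L ≤ 2 * i) :
    ∑ k ∈ range (L - i + 1), X ^ k * Rpoly (L - 2 * k) = Ppoly ((L : ℤ) - 1) i := by
  rcases le_or_gt L i with hLi | hLi
  · rw [show L - i = 0 from by omega]
    rw [Finset.sum_range_one, pow_zero, one_mul, Nat.mul_zero, Nat.sub_zero]
    exact Rpoly_eq_Ppoly hi hLi
  · have key := mul_Rpoly i (L - i)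
    rw [min_eq_right (by omega : L - i ≤ i), show i + (L - i) = L from by omega] at key
    rw [← key, Ppoly_nonneg_eq (by omega : (0:ℤ) ≤ (L:ℤ) - 1)]
    have t1 : ((L:ℤ) - 1).toNat = L - 1 - i + i := by omega
    rw [t1, Nat.add_div_right _ (by omega), Nat.add_mod_right,
      Nat.div_eq_of_lt (by omega), Nat.mod_eq_of_lt (by omega), zero_add, pow_one,
      show L - 1 - i + 1 = L - i from by omega]

def InCone (D : ℤ) (i : ℕ) (p : ℚ[X]) : Prop :=
  ∃ g : ℕ → ℚ, (∀ j, 0 ≤ g j) ∧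
    p = ∑ j ∈ range (((D + 1) / 2).toNat + 1), C (g j) * X ^ j * Ppoly (D - 2 * j) i

lemma inCone_basis {D : ℤ} (i : ℕ) (j : ℕ) (hj : (j : ℤ) ≤ (D + 1) / 2) :
    InCone D i (X ^ j * Ppoly (D - 2 * j) i) := by
  refine ⟨fun n => if n = j then 1 else 0, fun n => by dsimp only; split <;> norm_num, ?_⟩
  rw [Finset.sum_eq_single j]
  · simp
  · intro b _ hb; simp [hb]
  · intro hj'
    exact absurd (Finset.mem_range.mpr (by omega)) hj'

lemma inCone_zero {D : ℤ} (i : ℕ) : InCone D i 0 :=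
  ⟨fun _ => 0, fun _ => le_refl _, by simp⟩

lemma inCone_add {D : ℤ} {i : ℕ} {p q : ℚ[X]} (hp : InCone D i p) (hq : InCone D i q) :
    InCone D i (p + q) := by
  obtain ⟨g, hg, rfl⟩ := hp
  obtain ⟨g', hg', rfl⟩ := hq
  exact ⟨fun n => g n + g' n, fun n => add_nonneg (hg n) (hg' n), by
    rw [← Finset.sum_add_distrib]
    exact Finset.sum_congr rfl fun k _ => by rw [C_add]; ring⟩

lemma inCone_smul {D : ℤ} {i : ℕ} {c : ℚ} {p : ℚ[X]} (hc : 0 ≤ c) (hp : InCone D i p) :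
    InCone D i (C c * p) := by
  obtain ⟨g, hg, rfl⟩ := hp
  exact ⟨fun n => c * g n, fun n => mul_nonneg hc (hg n), by
    rw [Finset.mul_sum]
    exact Finset.sum_congr rfl fun k _ => by rw [C_mul]; ring⟩

lemma inCone_sum {D : ℤ} {i : ℕ} {α : Type*} (s : Finset α) (f : α → ℚ[X])
    (hf : ∀ a ∈ s, InCone D i (f a)) : InCone D i (∑ a ∈ s, f a) := by
  induction s using Finset.cons_induction with
  | empty => simpa using inCone_zero i
  | cons a s ha ih =>
      rw [Finset.sum_cons]
      exact inCone_add (hf a (Finset.mem_cons_self a s))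
        (ih fun b hb => hf b (Finset.mem_cons_of_mem hb))

lemma inCone_X_mul {D : ℤ} {i : ℕ} {p : ℚ[X]} (hD : -1 ≤ D) (hp : InCone D i p) :
    InCone (D + 2) i (X * p) := by
  obtain ⟨g, hg, rfl⟩ := hp
  refine ⟨fun n => if n = 0 then 0 else g (n - 1),
    fun n => by dsimp only; split; exacts [le_refl 0, hg _], ?_⟩
  have hN : ((D + 2 + 1) / 2).toNat + 1 = (((D + 1) / 2).toNat + 1) + 1 := by omega
  rw [hN, Finset.sum_range_succ'
    (fun x => C (if x = 0 then (0:ℚ) else g (x - 1)) * X ^ x * Ppoly (D + 2 - 2 * (x : ℤ)) i)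
    (((D + 1) / 2).toNat + 1), Finset.mul_sum]
  have h0 : C (if 0 = 0 then (0:ℚ) else g (0 - 1)) * X ^ 0 * Ppoly (D + 2 - 2 * ((0:ℕ) : ℤ)) i = 0 := by
    norm_num
  rw [h0, add_zero]
  refine Finset.sum_congr rfl fun k _ => ?_
  have hif : (if k + 1 = 0 then (0:ℚ) else g (k + 1 - 1)) = g k := by simp
  have e : D + 2 - 2 * (((k + 1 : ℕ)) : ℤ) = D - 2 * (k : ℤ) := by push_cast; ring
  rw [hif, e]
  ring

lemma inCone_X_pow {D : ℤ} {i : ℕ} {p : ℚ[X]} (hD : -1 ≤ D) (k : ℕ) (hp : InCone D i p) :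
    InCone (D + 2 * k) i (X ^ k * p) := by
  induction k with
  | zero => simpa using hp
  | succ n ih =>
      have h1 : InCone (D + 2 * n + 2) i (X * (X ^ n * p)) :=
        inCone_X_mul (by omega) ih
      have e1 : D + 2 * ((n : ℤ) + 1) = D + 2 * n + 2 := by ring
      have e2 : (X : ℚ[X]) ^ (n + 1) * p = X * (X ^ n * p) := by ring
      rw [e2]
      push_cast
      rw [e1]
      exact h1

lemma inCone_RR {i : ℕ} (hi : 1 ≤ i) (Q : ℕ) {r r' : ℕ} (hr1 : 1 ≤ r) (hri : r ≤ i)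
    (hr'1 : 1 ≤ r') (hr'i : r' ≤ i) :
    InCone (((Q * i + r + r' : ℕ) : ℤ) - 1) i (Rpoly i ^ Q * (Rpoly r * Rpoly r')) := by
  set D : ℤ := ((Q * i + r + r' : ℕ) : ℤ) - 1 with hD
  have hML : 2 * min r r' ≤ r + r' := by omega
  have e0 : Rpoly r * Rpoly r' = ∑ k ∈ range (min r r' + 1), X ^ k * Rpoly (r + r' - 2 * k) :=
    mul_Rpoly r r'
  have hsplit : (∑ k ∈ range (r + r' - i + 1), X ^ k * Rpoly (r + r' - 2 * k))
      + ∑ k ∈ Ico (r + r' - i + 1) (min r r' + 1), X ^ k * Rpoly (r + r' - 2 * k)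
      = ∑ k ∈ range (min r r' + 1), X ^ k * Rpoly (r + r' - 2 * k) := by
    rw [Finset.range_eq_Ico, Finset.range_eq_Ico]
    exact Finset.sum_Ico_consecutive (fun k => (X : ℚ[X]) ^ k * Rpoly (r + r' - 2 * k)) (m := 0) (n := r + r' - i + 1) (k := min r r' + 1) (by omega) (by omega)
  have e1 : Rpoly i ^ Q * (Rpoly r * Rpoly r')
      = Rpoly i ^ Q * Ppoly (((r + r' : ℕ) : ℤ) - 1) i
        + ∑ k ∈ Ico (r + r' - i + 1) (min r r' + 1),
            Rpoly i ^ Q * (X ^ k * Rpoly (r + r' - 2 * k)) := by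
    rw [e0, ← hsplit, chunk hi (by omega) (by omega), mul_add, Finset.mul_sum]
  rw [e1]
  apply inCone_add
  · have ehead : Rpoly i ^ Q * Ppoly (((r + r' : ℕ) : ℤ) - 1) i = Ppoly D i := by
      rw [pow_mul_Ppoly hi Q (r + r')]
      congr 2
      push_cast
      omega
    rw [ehead]
    simpa using inCone_basis (D := D) i 0 (by omega)
  · apply inCone_sum
    intro k hk
    have hk1 : r + r' - i + 1 ≤ k := (Finset.mem_Ico.1 hk).1
    have hk2 : k ≤ min r r' := by have := (Finset.mem_Ico.1 hk).2; omega
    have hs : r + r' - 2 * k ≤ i := by omega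
    have e2 : Rpoly i ^ Q * (X ^ k * Rpoly (r + r' - 2 * k)) = X ^ k * Ppoly (D - 2 * k) i := by
      rw [Rpoly_eq_Ppoly hi hs,
        show Rpoly i ^ Q * (X ^ k * Ppoly (((r + r' - 2 * k : ℕ) : ℤ) - 1) i)
          = X ^ k * (Rpoly i ^ Q * Ppoly (((r + r' - 2 * k : ℕ) : ℤ) - 1) i) from by ring,
        pow_mul_Ppoly hi Q (r + r' - 2 * k)]
      congr 2
      omega
    rw [e2]
    exact inCone_basis i k (by omega)

lemma inCone_PP {i : ℕ} (hi : 1 ≤ i) {a b : ℤ} (ha : -1 ≤ a) (hb : -1 ≤ b) :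
    InCone (a + b + 1) i (Ppoly a i * Ppoly b i) := by
  rcases eq_or_lt_of_le ha with h | ha0
  · rw [← h, Ppoly_neg (d := -1) (by norm_num) i, one_mul, show (-1 : ℤ) + b + 1 = b from by ring]
    simpa using inCone_basis (D := b) i 0 (by omega)
  rcases eq_or_lt_of_le hb with h | hb0
  · rw [← h, Ppoly_neg (d := -1) (by norm_num) i, mul_one, show a + -1 + 1 = a from by ring]
    simpa using inCone_basis (D := a) i 0 (by omega)
  have ha0' : 0 ≤ a := by omega
  have hb0' : 0 ≤ b := by omega
  have hra : a.toNat % i < i := Nat.mod_lt _ (by omega)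
  have hrb : b.toNat % i < i := Nat.mod_lt _ (by omega)
  have key := inCone_RR hi (a.toNat / i + b.toNat / i) (r := a.toNat % i + 1)
    (r' := b.toNat % i + 1) (by omega) (by omega) (by omega) (by omega)
  have e1 : Ppoly a i * Ppoly b i
      = Rpoly i ^ (a.toNat / i + b.toNat / i)
        * (Rpoly (a.toNat % i + 1) * Rpoly (b.toNat % i + 1)) := by
    rw [Ppoly_nonneg_eq ha0' i, Ppoly_nonneg_eq hb0' i, pow_add]; ring
  have d1 := Nat.div_add_mod' a.toNat i
  have d2 := Nat.div_add_mod' b.toNat i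
  have en : (a.toNat / i + b.toNat / i) * i + (a.toNat % i + 1) + (b.toNat % i + 1)
      = (a + b + 2).toNat := by
    rw [Nat.add_mul]
    omega
  have e2 : a + b + 1 = (((a.toNat / i + b.toNat / i) * i + (a.toNat % i + 1)
      + (b.toNat % i + 1) : ℕ) : ℤ) - 1 := by
    rw [en]
    omega
  rw [e1, e2]
  exact key

/-- if `h` is a nonnegative rational combination of the basis
`B_{m,i} = (t^j P_{m-2j,i})_j` and `h'` is a nonnegative rational combination of `B_{m',i}`,
then `h·h'` is a nonnegative rational combination of `B_{m+m'+1,i}`; i.e. nonnegativity of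
`g^{(m,i)}(h)` and `g^{(m',i)}(h')` implies nonnegativity of `g^{(m+m'+1,i)}(h·h')`. -/
theorem g_vector_join (m m' i : ℕ) (hi : 1 ≤ i) (h h' : ℚ[X])
    (hg : ∃ g : ℕ → ℚ, (∀ j, 0 ≤ g j) ∧
      h = ∑ j ∈ range ((m + 1) / 2 + 1),
        C (g j) * X ^ j * Ppoly ((m : ℤ) - 2 * j) i)
    (hg' : ∃ g' : ℕ → ℚ, (∀ j, 0 ≤ g' j) ∧
      h' = ∑ j ∈ range ((m' + 1) / 2 + 1),
        C (g' j) * X ^ j * Ppoly ((m' : ℤ) - 2 * j) i) :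
    ∃ g'' : ℕ → ℚ, (∀ j, 0 ≤ g'' j) ∧
      h * h' = ∑ j ∈ range ((m + m' + 2) / 2 + 1),
        C (g'' j) * X ^ j * Ppoly ((m : ℤ) + m' + 1 - 2 * j) i := by
  obtain ⟨g, hg0, hgeq⟩ := hg
  obtain ⟨g', hg'0, hg'eq⟩ := hg'
  have main : InCone ((m : ℤ) + m' + 1) i (h * h') := by
    rw [hgeq, hg'eq, Finset.sum_mul_sum]
    apply inCone_sum
    intro j hj
    apply inCone_sum
    intro j' hj'
    have hjm : 2 * j ≤ m + 1 := by have := Finset.mem_range.1 hj; omega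
    have hj'm : 2 * j' ≤ m' + 1 := by have := Finset.mem_range.1 hj'; omega
    have ha : (-1 : ℤ) ≤ (m : ℤ) - 2 * j := by omega
    have hb : (-1 : ℤ) ≤ (m' : ℤ) - 2 * j' := by omega
    have key := inCone_X_pow
      (by omega : (-1 : ℤ) ≤ ((m : ℤ) - 2 * j) + ((m' : ℤ) - 2 * j') + 1) (j + j')
      (inCone_PP hi ha hb)
    have eD : ((m : ℤ) - 2 * j) + ((m' : ℤ) - 2 * j') + 1 + 2 * ((j + j' : ℕ) : ℤ)
        = (m : ℤ) + m' + 1 := by push_cast; ring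
    rw [eD] at key
    have eterm : C (g j) * X ^ j * Ppoly ((m : ℤ) - 2 * j) i
          * (C (g' j') * X ^ j' * Ppoly ((m' : ℤ) - 2 * j') i)
        = C (g j * g' j')
          * (X ^ (j + j') * (Ppoly ((m : ℤ) - 2 * j) i * Ppoly ((m' : ℤ) - 2 * j') i)) := by
      rw [C_mul, pow_add]; ring
    rw [eterm]
    exact inCone_smul (mul_nonneg (hg0 j) (hg'0 j')) key
  obtain ⟨g'', h0, heq⟩ := main
  refine ⟨g'', h0, ?_⟩
  rw [heq]
  have hcount : (((m : ℤ) + m' + 1 + 1) / 2).toNat + 1 = (m + m' + 2) / 2 + 1 := by omega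
  rw [hcount]
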